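/- On two qubits, R_x² = exp(-i(π/2)σx^tot) commutes with U_yy U_xx, where U_γγ = exp(-iΔt σ_γ⊗σ_γ): (R_x⊗R_x)² U_yy U_xx = U_yy U_xx (R_x⊗R_x)². -/

import Mathlib

open Matrix Kronecker

noncomputable section

def σx : Matrix (Fin 2) (Fin 2) ℂ := !![0, 1; 1, 0]
def σy : Matrix (Fin 2) (Fin 2) ℂ := !![0, -Complex.I; Complex.I, 0]
def σz : Matrix (Fin 2) (Fin 2) ℂ := !![1, 0; 0, -1]

/-- The single-qubit rotation `R_γ = exp(-i(π/4)σ_γ)`. -/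
def R (σ : Matrix (Fin 2) (Fin 2) ℂ) : Matrix (Fin 2) (Fin 2) ℂ :=
  NormedSpace.exp ((-(Real.pi / 4 : ℝ) * Complex.I) • σ)

def H : Matrix (Fin 2) (Fin 2) ℂ := !![1, 1; 1, -1]

lemma H_mul_H : H * ((2⁻¹ : ℂ) • H) = 1 := by
  ext i j; fin_cases i <;> fin_cases j <;>
    simp [H, Matrix.mul_apply, Fin.sum_univ_two] <;> ring

lemma H_mul_H' : ((2⁻¹ : ℂ) • H) * H = 1 := by
  ext i j; fin_cases i <;> fin_cases j <;>
    simp [H, Matrix.mul_apply, Fin.sum_univ_two] <;> ring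

def U2 : (Matrix (Fin 2) (Fin 2) ℂ)ˣ := ⟨H, (2⁻¹ : ℂ) • H, H_mul_H, H_mul_H'⟩

lemma sigma_x_diag (c : ℂ) : c • σx = (U2 : Matrix (Fin 2) (Fin 2) ℂ) * diagonal (![c, -c] : Fin 2 → ℂ) * ((U2⁻¹ : (Matrix (Fin 2) (Fin 2) ℂ)ˣ) : Matrix (Fin 2) (Fin 2) ℂ) := by
  show c • σx = H * diagonal (![c, -c] : Fin 2 → ℂ) * ((2⁻¹ : ℂ) • H)
  ext i j; fin_cases i <;> fin_cases j <;>
    simp [H, σx, Matrix.mul_apply, Fin.sum_univ_two, Matrix.diagonal_apply, Matrix.vecHead, Matrix.vecTail, Matrix.vecMul, dotProduct] <;> ring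

lemma exp_sigma_x (c : ℂ) :
    NormedSpace.exp (c • σx) = H * diagonal (![Complex.exp c, Complex.exp (-c)] : Fin 2 → ℂ) * ((2⁻¹ : ℂ) • H) := by
  rw [sigma_x_diag c, Matrix.exp_units_conj, Matrix.exp_diagonal]
  have : (NormedSpace.exp (![c, -c] : Fin 2 → ℂ)) = ![Complex.exp c, Complex.exp (-c)] := by
    funext i
    fin_cases i <;> simp [Pi.exp_def, Complex.exp_eq_exp_ℂ]
  rw [this]
  rfl

def K : Matrix (Fin 2 × Fin 2) (Fin 2 × Fin 2) ℂ := H ⊗ₖ H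

lemma H_sq : H * H = (2 : ℂ) • 1 := by
  ext i j; fin_cases i <;> fin_cases j <;>
    simp [H, Matrix.mul_apply, Fin.sum_univ_two] <;> ring

lemma K_mul : K * K = (4 : ℂ) • 1 := by
  rw [K, ← Matrix.mul_kronecker_mul, H_sq, Matrix.smul_kronecker, Matrix.kronecker_smul,
    Matrix.one_kronecker_one, smul_smul]
  norm_num

lemma K_inv_r : K * ((4⁻¹ : ℂ) • K) = 1 := by
  rw [mul_smul_comm, K_mul, smul_smul]; norm_num

lemma K_inv_l : ((4⁻¹ : ℂ) • K) * K = 1 := by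
  rw [smul_mul_assoc, K_mul, smul_smul]; norm_num

def U4 : (Matrix (Fin 2 × Fin 2) (Fin 2 × Fin 2) ℂ)ˣ := ⟨K, (4⁻¹ : ℂ) • K, K_inv_r, K_inv_l⟩

lemma HσzH : H * σz * ((2⁻¹ : ℂ) • H) = σx := by
  ext i j; fin_cases i <;> fin_cases j <;>
    simp [H, σz, σx, Matrix.mul_apply, Fin.sum_univ_two] <;> ring

lemma kron_conj (A B : Matrix (Fin 2) (Fin 2) ℂ) :
    (H * A * ((2⁻¹ : ℂ) • H)) ⊗ₖ (H * B * ((2⁻¹ : ℂ) • H))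
      = K * (A ⊗ₖ B) * ((4⁻¹ : ℂ) • K) := by
  rw [Matrix.mul_kronecker_mul, Matrix.mul_kronecker_mul,
    Matrix.smul_kronecker, Matrix.kronecker_smul, smul_smul]
  rw [K]
  norm_num

lemma Kconj_mul (A B : Matrix (Fin 2 × Fin 2) (Fin 2 × Fin 2) ℂ) :
    (K * A * ((4⁻¹ : ℂ) • K)) * (K * B * ((4⁻¹ : ℂ) • K))
      = K * (A * B) * ((4⁻¹ : ℂ) • K) := by
  have h : (K * A * ((4⁻¹ : ℂ) • K)) * (K * B * ((4⁻¹ : ℂ) • K))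
      = K * A * (((4⁻¹ : ℂ) • K) * K) * B * ((4⁻¹ : ℂ) • K) := by
    noncomm_ring
  rw [h, K_inv_l, mul_one, mul_assoc K A B]

lemma sigma_z_diag : σz = diagonal (![1, -1] : Fin 2 → ℂ) := by
  ext i j; fin_cases i <;> fin_cases j <;> simp [σz, Matrix.diagonal_apply]

lemma exp_four : Complex.exp ((-(Real.pi / 4 : ℝ) * Complex.I)) ^ 4 = -1 := by
  rw [← Complex.exp_nat_mul]
  have : ((4 : ℕ) : ℂ) * (-(Real.pi / 4 : ℝ) * Complex.I) = -(Real.pi * Complex.I) := by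
    push_cast; ring
  rw [this, Complex.exp_neg, Complex.exp_pi_mul_I]
  norm_num

lemma N_eq : K * (-(σz ⊗ₖ σz)) * ((4⁻¹ : ℂ) • K) = -(σx ⊗ₖ σx) := by
  rw [mul_neg, neg_mul, ← kron_conj, HσzH]

lemma Dr_sq : ((diagonal (![Complex.exp (-(Real.pi / 4 : ℝ) * Complex.I),
      Complex.exp (-(-(Real.pi / 4 : ℝ) * Complex.I))] : Fin 2 → ℂ)) ⊗ₖ
    (diagonal (![Complex.exp (-(Real.pi / 4 : ℝ) * Complex.I),
      Complex.exp (-(-(Real.pi / 4 : ℝ) * Complex.I))] : Fin 2 → ℂ))) ^ 2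
      = -(σz ⊗ₖ σz) := by
  set c : ℂ := -(Real.pi / 4 : ℝ) * Complex.I with hc
  rw [Matrix.diagonal_kronecker_diagonal, sigma_z_diag, Matrix.diagonal_kronecker_diagonal,
    pow_two, Matrix.diagonal_mul_diagonal]
  have h4 : Complex.exp c ^ 4 = -1 := by rw [hc]; exact exp_four
  have h1 : Complex.exp c * Complex.exp c * (Complex.exp c * Complex.exp c) = -1 := by
    rw [← h4]; ring
  have h2 : Complex.exp c * Complex.exp (-c) = 1 := by
    rw [← Complex.exp_add]; simp
  have h2' : Complex.exp (-c) * Complex.exp c = 1 := by rw [mul_comm]; exact h2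
  have h3 : Complex.exp (-c) * Complex.exp (-c) * (Complex.exp (-c) * Complex.exp (-c)) = -1 := by
    simp only [Complex.exp_neg, ← mul_inv]
    rw [h1]; norm_num
  ext ⟨i, j⟩ ⟨k, l⟩
  fin_cases i <;> fin_cases j <;> fin_cases k <;> fin_cases l <;>
    simp [Matrix.diagonal_apply, Prod.ext_iff, h1, h2, h2', h3]


lemma Rsq : (R σx ⊗ₖ R σx) * (R σx ⊗ₖ R σx) = -(σx ⊗ₖ σx) := by
  rw [show R σx = NormedSpace.exp ((-(Real.pi / 4 : ℝ) * Complex.I) • σx) from rfl,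
    exp_sigma_x, kron_conj, Kconj_mul, ← pow_two, Dr_sq, N_eq]

lemma e1 : σx ⊗ₖ (1 : Matrix (Fin 2) (Fin 2) ℂ) = K * (σz ⊗ₖ (1 : Matrix (Fin 2) (Fin 2) ℂ)) * ((4⁻¹ : ℂ) • K) := by
  rw [← kron_conj, HσzH, mul_one, H_mul_H]

lemma e2 : (1 : Matrix (Fin 2) (Fin 2) ℂ) ⊗ₖ σx = K * ((1 : Matrix (Fin 2) (Fin 2) ℂ) ⊗ₖ σz) * ((4⁻¹ : ℂ) • K) := by
  rw [← kron_conj, HσzH, mul_one, H_mul_H]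

def w : Fin 2 × Fin 2 → ℂ := fun p =>
  (-(Real.pi / 2 : ℝ) * Complex.I) * ((![1, -1] : Fin 2 → ℂ) p.1 + (![1, -1] : Fin 2 → ℂ) p.2)

lemma hdiag : (-(Real.pi / 2 : ℝ) * Complex.I) •
    (σz ⊗ₖ (1 : Matrix (Fin 2) (Fin 2) ℂ) + (1 : Matrix (Fin 2) (Fin 2) ℂ) ⊗ₖ σz)
      = diagonal w := by
  ext ⟨i, j⟩ ⟨k, l⟩
  fin_cases i <;> fin_cases j <;> fin_cases k <;> fin_cases l <;>
    simp [Matrix.diagonal_apply, σz, w, Prod.ext_iff, Matrix.one_apply] <;> ring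

lemma gen_eq : ((-(Real.pi / 2 : ℝ) * Complex.I)) •
    (σx ⊗ₖ (1 : Matrix (Fin 2) (Fin 2) ℂ) + (1 : Matrix (Fin 2) (Fin 2) ℂ) ⊗ₖ σx)
      = K * diagonal w * ((4⁻¹ : ℂ) • K) := by
  rw [e1, e2, ← add_mul, ← mul_add, ← smul_mul_assoc, ← mul_smul_comm, hdiag]

lemma expw : NormedSpace.exp (w : Fin 2 × Fin 2 → ℂ)
    = fun p => -((![1, -1] : Fin 2 → ℂ) p.1 * (![1, -1] : Fin 2 → ℂ) p.2) := by
  have hm : Complex.exp (-(↑Real.pi * Complex.I)) = -1 := by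
    rw [Complex.exp_neg, Complex.exp_pi_mul_I]; norm_num
  funext ⟨i, j⟩
  rw [Pi.exp_def]
  simp only [← Complex.exp_eq_exp_ℂ]
  fin_cases i <;> fin_cases j <;> simp [w]
  · rw [show (-((Real.pi : ℂ) / 2 * Complex.I * (1 + 1))) = -((Real.pi : ℂ) * Complex.I) from by ring, hm]
  · rw [show (-((Real.pi : ℂ) / 2 * Complex.I * (-1 + -1))) = (Real.pi : ℂ) * Complex.I from by ring,
      Complex.exp_pi_mul_I]

lemma diagw : diagonal (fun p : Fin 2 × Fin 2 => -((![1, -1] : Fin 2 → ℂ) p.1 * (![1, -1] : Fin 2 → ℂ) p.2))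
    = -(σz ⊗ₖ σz) := by
  rw [sigma_z_diag]
  ext ⟨i, j⟩ ⟨k, l⟩
  fin_cases i <;> fin_cases j <;> fin_cases k <;> fin_cases l <;>
    simp [Matrix.diagonal_apply, Prod.ext_iff]

lemma Rx2_eq : NormedSpace.exp ((-(Real.pi / 2 : ℝ) * Complex.I) •
    (σx ⊗ₖ (1 : Matrix (Fin 2) (Fin 2) ℂ) + (1 : Matrix (Fin 2) (Fin 2) ℂ) ⊗ₖ σx))
      = -(σx ⊗ₖ σx) := by
  rw [gen_eq]
  rw [show K * diagonal w * ((4⁻¹ : ℂ) • K)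
      = (U4 : Matrix (Fin 2 × Fin 2) (Fin 2 × Fin 2) ℂ) * diagonal w
        * ((U4⁻¹ : (Matrix (Fin 2 × Fin 2) (Fin 2 × Fin 2) ℂ)ˣ) : Matrix (Fin 2 × Fin 2) (Fin 2 × Fin 2) ℂ) from rfl,
    Matrix.exp_units_conj, Matrix.exp_diagonal, expw]
  show K * _ * ((4⁻¹ : ℂ) • K) = _
  rw [diagw, N_eq]

lemma xy_comm : Commute (σx ⊗ₖ σx) (σy ⊗ₖ σy) := by
  show _ * _ = _ * _
  ext ⟨i, j⟩ ⟨k, l⟩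
  fin_cases i <;> fin_cases j <;> fin_cases k <;> fin_cases l <;>
    simp [Matrix.mul_apply, Fintype.sum_prod_type, Fin.sum_univ_two, σx, σy] <;> ring

/-- On two qubits, the π-pulse `R_x² = exp(-i(π/2)σx^tot)` commutes with `U_yy U_xx`, where
`U_γγ = exp(-iΔt σ_γ⊗σ_γ)`. -/
theorem stmt_14 (Δt : ℝ) :
    let Rx2 : Matrix (Fin 2 × Fin 2) (Fin 2 × Fin 2) ℂ :=
      NormedSpace.exp ((-(Real.pi / 2 : ℝ) * Complex.I) • (σx ⊗ₖ (1 : Matrix (Fin 2) (Fin 2) ℂ) + (1 : Matrix (Fin 2) (Fin 2) ℂ) ⊗ₖ σx))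
    let Uxx := NormedSpace.exp ((-(Δt : ℂ) * Complex.I) • (σx ⊗ₖ σx))
    let Uyy := NormedSpace.exp ((-(Δt : ℂ) * Complex.I) • (σy ⊗ₖ σy))
    Rx2 = (R σx ⊗ₖ R σx) * (R σx ⊗ₖ R σx) ∧
    Rx2 * (Uyy * Uxx) = (Uyy * Uxx) * Rx2 := by
  intro Rx2 Uxx Uyy
  have hR : Rx2 = -(σx ⊗ₖ σx) := Rx2_eq
  constructor
  · rw [hR, Rsq]
  · have c1 : Commute (-(σx ⊗ₖ σx)) ((-(Δt : ℂ) * Complex.I) • (σx ⊗ₖ σx)) :=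
      ((Commute.refl (σx ⊗ₖ σx)).neg_left).smul_right _
    have c2 : Commute (-(σx ⊗ₖ σx)) ((-(Δt : ℂ) * Complex.I) • (σy ⊗ₖ σy)) :=
      (xy_comm.neg_left).smul_right _
    have h := (c2.exp_right).mul_right (c1.exp_right)
    rw [hR]
    exact h
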